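/- If P is a point on a midline of a unit square (the segment joining midpoints of two opposite sides), then the four distances from P to the vertices cannot all be rational. -/

import Mathlib

/-- A common prime of the pair would divide both `m` and `n`. -/
private lemma coprime_of_no_common (a b m n : ℤ) (hcop : IsCoprime m n)
    (H : ∀ p : ℕ, p.Prime → (p : ℤ) ∣ a → (p : ℤ) ∣ b → (p : ℤ) ∣ m ∧ (p : ℤ) ∣ n) :
    IsCoprime a b := by
  rw [Int.isCoprime_iff_gcd_eq_one]
  by_contra hg
  obtain ⟨p, hp, hpdvd⟩ := Nat.exists_prime_and_dvd hg
  have hpa : (p : ℤ) ∣ a :=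
    dvd_trans (Int.natCast_dvd_natCast.mpr hpdvd) (Int.gcd_dvd_left _ _)
  have hpb : (p : ℤ) ∣ b :=
    dvd_trans (Int.natCast_dvd_natCast.mpr hpdvd) (Int.gcd_dvd_right _ _)
  obtain ⟨hpm, hpn⟩ := H p hp hpa hpb
  have hu := hcop.isUnit_of_dvd' hpm hpn
  rw [Int.isUnit_iff] at hu
  have hp2 : (2 : ℤ) ≤ (p : ℤ) := by exact_mod_cast hp.two_le
  rcases hu with h1 | h1 <;> omega

/-- Coprime positive integers whose product is a fourth power are fourth powers. -/
private lemma pow4_of_coprime {a b n : ℤ} (h : IsCoprime a b) (heq : a * b = n ^ 4)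
    (ha : 0 < a) (hb : 0 < b) : ∃ s t : ℤ, a = s ^ 4 ∧ b = t ^ 4 := by
  have heq2 : a * b = (n ^ 2) ^ 2 := by rw [heq]; ring
  obtain ⟨d, hd⟩ := Int.sq_of_isCoprime h heq2
  obtain ⟨e, he⟩ := Int.sq_of_isCoprime h.symm (by rw [mul_comm]; exact heq2)
  have had : a = d ^ 2 := by
    rcases hd with hd | hd
    · exact hd
    · exfalso; nlinarith [sq_nonneg d]
  have hbe : b = e ^ 2 := by
    rcases he with he | he
    · exact he
    · exfalso; nlinarith [sq_nonneg e]
  have hde : IsCoprime d e := by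
    have : IsCoprime (d ^ 2) (e ^ 2) := by rwa [← had, ← hbe]
    exact (IsCoprime.pow_left_iff two_pos).mp ((IsCoprime.pow_right_iff two_pos).mp this)
  have hprod : (d * e - n ^ 2) * (d * e + n ^ 2) = 0 := by
    have : (d * e) ^ 2 = (n ^ 2) ^ 2 := by rw [mul_pow, ← had, ← hbe]; exact heq2
    linear_combination this
  have hcases : d * e = n ^ 2 ∨ d * e = -n ^ 2 := by
    rcases mul_eq_zero.mp hprod with h0 | h0
    · left; linarith
    · right; linarith
  rcases hcases with hde2 | hde2
  · obtain ⟨s, hs⟩ := Int.sq_of_isCoprime hde hde2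
    obtain ⟨t, ht⟩ := Int.sq_of_isCoprime hde.symm (by rw [mul_comm]; exact hde2)
    refine ⟨s, t, ?_, ?_⟩
    · rcases hs with h | h <;> rw [had, h] <;> ring
    · rcases ht with h | h <;> rw [hbe, h] <;> ring
  · have hde3 : (-d) * e = n ^ 2 := by linarith
    obtain ⟨s, hs⟩ := Int.sq_of_isCoprime hde.neg_left hde3
    obtain ⟨t, ht⟩ := Int.sq_of_isCoprime hde.symm.neg_right
      (by rw [mul_comm]; exact hde3)
    refine ⟨s, t, ?_, ?_⟩
    · rcases hs with h | h
      · rw [had, show d = -s^2 by linarith]; ring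
      · rw [had, show d = s^2 by linarith]; ring
    · rcases ht with h | h <;> rw [hbe, h] <;> ring

set_option maxHeartbeats 1000000 in
/-- The descent step: any solution of `m^4 + 4n^4 = c^2` with `c > 0` yields a smaller one. -/
private lemma descent_step (m n c : ℤ) (hm : m ≠ 0) (hn : n ≠ 0) (hc : 0 < c)
    (heq : m ^ 4 + 4 * n ^ 4 = c ^ 2) :
    ∃ m' n' c' : ℤ, m' ≠ 0 ∧ n' ≠ 0 ∧ m' ^ 4 + 4 * n' ^ 4 = c' ^ 2 ∧
      c'.natAbs < c.natAbs := by
  have four_ne : (4 : ℤ) ≠ 0 := by norm_num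
  by_cases hcop : IsCoprime m n
  swap
  · -- not coprime: divide by the gcd
    have hg1 : Int.gcd m n ≠ 1 := fun h => hcop (Int.isCoprime_iff_gcd_eq_one.mpr h)
    have hg0 : Int.gcd m n ≠ 0 := fun h => hm (Int.gcd_eq_zero_iff.mp h).1
    set g : ℤ := (Int.gcd m n : ℤ) with hgdef
    have hg2 : 2 ≤ g := by
      have h2 : 2 ≤ Int.gcd m n := by omega
      rw [hgdef]
      exact_mod_cast h2
    obtain ⟨m1, hm1⟩ : g ∣ m := Int.gcd_dvd_left _ _
    obtain ⟨n1, hn1⟩ : g ∣ n := Int.gcd_dvd_right _ _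
    have hdvd : (g ^ 2) ^ 2 ∣ c ^ 2 :=
      ⟨m1 ^ 4 + 4 * n1 ^ 4, by rw [← heq, hm1, hn1]; ring⟩
    obtain ⟨c1, hc1⟩ := (Int.pow_dvd_pow_iff two_ne_zero).mp hdvd
    have hg4 : g ^ 4 ≠ 0 := pow_ne_zero 4 (by linarith)
    rw [hm1, hn1, hc1] at heq
    have heq1 : m1 ^ 4 + 4 * n1 ^ 4 = c1 ^ 2 := by
      apply mul_left_cancel₀ hg4
      linear_combination heq
    have hm1ne : m1 ≠ 0 := by rintro rfl; rw [mul_zero] at hm1; exact hm hm1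
    have hn1ne : n1 ≠ 0 := by rintro rfl; rw [mul_zero] at hn1; exact hn hn1
    have hc1ne : c1 ≠ 0 := by rintro rfl; rw [mul_zero] at hc1; omega
    refine ⟨m1, n1, c1, hm1ne, hn1ne, heq1, ?_⟩
    rw [hc1, Int.natAbs_mul]
    have h1 : 1 ≤ c1.natAbs := Nat.one_le_iff_ne_zero.mpr (Int.natAbs_ne_zero.mpr hc1ne)
    have h2 : 4 ≤ (g ^ 2).natAbs := by
      have : (4 : ℤ) ≤ g ^ 2 := by nlinarith
      have h3 : (g ^ 2).natAbs = g ^ 2 := Int.natAbs_of_nonneg (by positivity)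
      omega
    nlinarith
  rcases Int.emod_two_eq_zero_or_one m with hm2 | hm2
  · -- m even
    obtain ⟨m1, hm1⟩ : (2 : ℤ) ∣ m := Int.dvd_of_emod_eq_zero hm2
    have hceven : Even c := by
      have h2 : Even (c ^ 2) := ⟨8 * m1 ^ 4 + 2 * n ^ 4, by rw [← heq, hm1]; ring⟩
      exact (Int.even_pow.mp h2).1
    obtain ⟨c1, hc1'⟩ := hceven
    have hc1 : c = 2 * c1 := by omega
    have hm1ne : m1 ≠ 0 := by rintro rfl; rw [mul_zero] at hm1; exact hm hm1
    have hc1ne : c1 ≠ 0 := by rintro rfl; omega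
    rw [hm1, hc1] at heq
    refine ⟨n, m1, c1, hn, hm1ne, ?_, ?_⟩
    · apply mul_left_cancel₀ four_ne
      linear_combination heq
    · have h1 : 1 ≤ c1.natAbs := Nat.one_le_iff_ne_zero.mpr (Int.natAbs_ne_zero.mpr hc1ne)
      have h2 : c.natAbs = 2 * c1.natAbs := by
        rw [hc1, Int.natAbs_mul]
        norm_num
      omega
  · -- main case : m odd and m, n coprime
    have hc0 : c ≠ 0 := ne_of_gt hc
    have hmodd : Odd m := Int.odd_iff.mpr hm2
    have hcodd : Odd c := by
      rcases Int.even_or_odd c with hce | hco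
      · exfalso
        obtain ⟨r, hr⟩ := hce
        have hme : Even (m ^ 4) :=
          ⟨2 * r ^ 2 - 2 * n ^ 4, by linear_combination heq + (c + 2 * r) * hr⟩
        have : Even m := (Int.even_pow.mp hme).1
        rw [Int.even_iff] at this
        omega
      · exact hco
    have hm2odd : Odd (m ^ 2) := hmodd.pow
    have hn4pos : (0 : ℤ) < n ^ 4 := by positivity
    have hm2c : m ^ 2 < c := by
      by_contra hle
      push_neg at hle
      have h1 : c * c ≤ m ^ 2 * m ^ 2 := mul_le_mul hle hle hc.le (by positivity)
      nlinarith
    obtain ⟨a1, ha1⟩ := hcodd.sub_odd hm2odd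
    obtain ⟨b1, hb1⟩ := hcodd.add_odd hm2odd
    have hab : a1 * b1 = n ^ 4 := by
      apply mul_left_cancel₀ four_ne
      linear_combination (-2 * b1) * ha1 + (m ^ 2 - c) * hb1 - heq
    have hkey : b1 - a1 = m ^ 2 := by linarith [ha1, hb1]
    have hcopab : IsCoprime a1 b1 := by
      apply coprime_of_no_common a1 b1 m n hcop
      intro p hp hpa hpb
      have hpint : Prime (p : ℤ) := Nat.prime_iff_prime_int.mp hp
      have hpm2 : (p : ℤ) ∣ m ^ 2 := hkey ▸ dvd_sub hpb hpa
      have hpn4 : (p : ℤ) ∣ n ^ 4 := hab ▸ hpa.mul_right b1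
      exact ⟨hpint.dvd_of_dvd_pow hpm2, hpint.dvd_of_dvd_pow hpn4⟩
    have ha1pos : 0 < a1 := by linarith
    have hb1pos : 0 < b1 := by nlinarith [sq_nonneg m]
    obtain ⟨s, t, hs4, ht4⟩ := pow4_of_coprime hcopab hab ha1pos hb1pos
    have hs0 : s ≠ 0 := by rintro rfl; simp at hs4; omega
    have ht0 : t ≠ 0 := by rintro rfl; simp at ht4; omega
    have hpyth : PythagoreanTriple m (s ^ 2) (t ^ 2) := by
      show m * m + s ^ 2 * s ^ 2 = t ^ 2 * t ^ 2
      linear_combination (-1 : ℤ) * hkey + (-1 : ℤ) * hs4 + ht4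
    have hgcdms : Int.gcd m (s ^ 2) = 1 := by
      rw [← Int.isCoprime_iff_gcd_eq_one]
      apply coprime_of_no_common m (s ^ 2) m n hcop
      intro p hp hpm hps2
      have hpint : Prime (p : ℤ) := Nat.prime_iff_prime_int.mp hp
      have hps : (p : ℤ) ∣ s := hpint.dvd_of_dvd_pow hps2
      have hpa1 : (p : ℤ) ∣ a1 := hs4 ▸ (dvd_pow hps four_ne_zero)
      have hpn4 : (p : ℤ) ∣ n ^ 4 := hab ▸ hpa1.mul_right b1
      exact ⟨hpm, hpint.dvd_of_dvd_pow hpn4⟩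
    have ht2pos : (0 : ℤ) < t ^ 2 := by positivity
    obtain ⟨p, q, hmp, hsq, htp, hpqcop, hpqpar, hp0⟩ :=
      PythagoreanTriple.coprime_classification' hpyth hgcdms hm2 ht2pos
    have hppos : 0 < p := by
      rcases hp0.lt_or_eq with h | h
      · exact h
      · exfalso; rw [← h] at hsq; simp at hsq; exact hs0 hsq
    have hpqpos : 0 < p * q := by nlinarith [sq_nonneg s, pow_pos (abs_pos.mpr hs0) 2]
    have hqpos : 0 < q := by nlinarith
    -- final size bound, independent of parity case
    have hsize : t.natAbs < c.natAbs := by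
      have h1 : 1 ≤ |t| := Int.one_le_abs ht0
      have e1 : 0 ≤ (|t| - 1) * |t| := mul_nonneg (by linarith) (abs_nonneg t)
      have e2 : (0 : ℤ) ≤ (t ^ 2 - 1) * t ^ 2 := by
        apply mul_nonneg _ (sq_nonneg t)
        nlinarith [sq_abs t]
      have habs : |t| < c := by nlinarith [sq_abs t]
      have := Int.natAbs_lt_natAbs_of_nonneg_of_lt (abs_nonneg t) habs
      rwa [Int.natAbs_abs] at this
    rcases hpqpar with hpar | hpar
    · -- p even
      obtain ⟨r, hr⟩ : (2 : ℤ) ∣ p := Int.dvd_of_emod_eq_zero hpar.1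
      have hseven : Even s := by
        have h2 : Even (s ^ 2) := ⟨2 * r * q, by rw [hsq, hr]; ring⟩
        exact (Int.even_pow.mp h2).1
      obtain ⟨w, hw'⟩ := hseven
      have hw : s = 2 * w := by omega
      have hrq : r * q = w ^ 2 := by
        apply mul_left_cancel₀ four_ne
        linear_combination (-1 : ℤ) * hsq + (-2 * q) * hr + (s + 2 * w) * hw
      have hrdvd : r ∣ p := ⟨2, by linarith⟩
      have hrqcop : IsCoprime r q :=
        (Int.isCoprime_iff_gcd_eq_one.mpr hpqcop).of_isCoprime_of_dvd_left hrdvd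
      have hrpos : 0 < r := by linarith
      obtain ⟨v, hv⟩ := Int.sq_of_isCoprime hrqcop hrq
      have hrv : r = v ^ 2 := by
        rcases hv with h | h
        · exact h
        · exfalso; linarith [sq_nonneg v]
      obtain ⟨uu, huu'⟩ := Int.sq_of_isCoprime hrqcop.symm (by rw [mul_comm]; exact hrq)
      have hqu : q = uu ^ 2 := by
        rcases huu' with h | h
        · exact h
        · exfalso; linarith [sq_nonneg uu]
      have huu0 : uu ≠ 0 := by rintro rfl; simp at hqu; omega
      have hv0 : v ≠ 0 := by rintro rfl; simp at hrv; omega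
      refine ⟨uu, v, t, huu0, hv0, ?_, hsize⟩
      have h : t ^ 2 = uu ^ 4 + 4 * v ^ 4 := by rw [htp, hr, hrv, hqu]; ring
      linarith
    · -- q even
      obtain ⟨r, hr⟩ : (2 : ℤ) ∣ q := Int.dvd_of_emod_eq_zero hpar.2
      have hseven : Even s := by
        have h2 : Even (s ^ 2) := ⟨2 * p * r, by rw [hsq, hr]; ring⟩
        exact (Int.even_pow.mp h2).1
      obtain ⟨w, hw'⟩ := hseven
      have hw : s = 2 * w := by omega
      have hpr : p * r = w ^ 2 := by
        apply mul_left_cancel₀ four_ne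
        linear_combination (-1 : ℤ) * hsq + (-2 * p) * hr + (s + 2 * w) * hw
      have hrdvd : r ∣ q := ⟨2, by linarith⟩
      have hprcop : IsCoprime p r :=
        (Int.isCoprime_iff_gcd_eq_one.mpr hpqcop).of_isCoprime_of_dvd_right hrdvd
      have hrpos : 0 < r := by linarith
      obtain ⟨uu, huu'⟩ := Int.sq_of_isCoprime hprcop hpr
      have hpu : p = uu ^ 2 := by
        rcases huu' with h | h
        · exact h
        · exfalso; linarith [sq_nonneg uu]
      obtain ⟨v, hv⟩ := Int.sq_of_isCoprime hprcop.symm (by rw [mul_comm]; exact hpr)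
      have hrv : r = v ^ 2 := by
        rcases hv with h | h
        · exact h
        · exfalso; linarith [sq_nonneg v]
      have huu0 : uu ≠ 0 := by rintro rfl; simp at hpu; omega
      have hv0 : v ≠ 0 := by rintro rfl; simp at hrv; omega
      refine ⟨uu, v, t, huu0, hv0, ?_, hsize⟩
      have h : t ^ 2 = uu ^ 4 + 4 * v ^ 4 := by rw [htp, hr, hrv, hpu]; ring
      linarith

private lemma no44 : ∀ N : ℕ, ∀ c m n : ℤ, c.natAbs = N → m ≠ 0 → n ≠ 0 →
    m ^ 4 + 4 * n ^ 4 ≠ c ^ 2 := by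
  intro N
  induction N using Nat.strong_induction_on with
  | _ N ih =>
    intro c m n hN hm hn heq
    have hc0 : c ≠ 0 := by
      intro h
      subst h
      have h1 : 0 < m ^ 4 := by positivity
      have h2 : 0 < n ^ 4 := by positivity
      simp at heq
      nlinarith
    have hcabs : 0 < |c| := abs_pos.mpr hc0
    have heq' : m ^ 4 + 4 * n ^ 4 = |c| ^ 2 := by rw [sq_abs]; exact heq
    obtain ⟨m', n', c', hm', hn', heq'', hlt⟩ := descent_step m n |c| hm hn hcabs heq'
    rw [Int.natAbs_abs, hN] at hlt
    exact ih c'.natAbs hlt c' m' n' rfl hm' hn' heq''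

private lemma key_int (m n c : ℤ) (hm : m ≠ 0) (hn : n ≠ 0) :
    m ^ 4 + 4 * n ^ 4 ≠ c ^ 2 :=
  no44 c.natAbs c m n rfl hm hn

/-- Rational-level key lemma. -/
private lemma key_rat (u a b : ℚ) (ha : a ^ 2 = (u + 1) ^ 2 + 1)
    (hb : b ^ 2 = (u - 1) ^ 2 + 1) : False := by
  by_cases hu0 : u = 0
  · subst hu0
    have ha2 : a ^ 2 = 2 := by rw [ha]; norm_num
    have h2 : ((a : ℝ)) ^ 2 = 2 := by exact_mod_cast congrArg (Rat.cast : ℚ → ℝ) ha2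
    have hs : Real.sqrt 2 = |(a : ℝ)| := by
      rw [← h2, Real.sqrt_sq_eq_abs]
    refine irrational_sqrt_two ⟨|a|, ?_⟩
    rw [hs]
    push_cast
    ring
  · set m : ℤ := u.num with hm
    set n : ℤ := (u.den : ℤ) with hn
    have hden : ((u.den : ℚ)) ≠ 0 := by
      exact_mod_cast u.den_nz
    have hud : u * ((u.den : ℤ) : ℚ) = ((u.num : ℤ) : ℚ) := by
      push_cast
      rw [eq_comm, ← div_eq_iff hden, Rat.num_div_den]
    -- A = a * den is an integer
    have hA : (a * ((u.den : ℤ) : ℚ)) ^ 2 = (((m + n) ^ 2 + n ^ 2 : ℤ) : ℚ) := by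
      push_cast
      linear_combination ((u.den : ℚ)) ^ 2 * ha
        + (u * (u.den : ℚ) + (u.num : ℚ) + 2 * (u.den : ℚ)) * hud
    have hB : (b * ((u.den : ℤ) : ℚ)) ^ 2 = (((m - n) ^ 2 + n ^ 2 : ℤ) : ℚ) := by
      push_cast
      linear_combination ((u.den : ℚ)) ^ 2 * hb
        + (u * (u.den : ℚ) + (u.num : ℚ) - 2 * (u.den : ℚ)) * hud
    -- extract integers
    have intify : ∀ q : ℚ, ∀ M : ℤ, q ^ 2 = (M : ℚ) → ∃ A : ℤ, (A : ℚ) = q := by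
      intro q M hq
      have hden1 : (q ^ 2).den = 1 := by rw [hq]; exact Rat.den_intCast M
      rw [Rat.den_pow] at hden1
      have : q.den = 1 := by
        have h2 := hden1
        nlinarith [q.pos]
      exact ⟨q.num, (Rat.den_eq_one_iff q).mp this⟩
    obtain ⟨A, hAq⟩ := intify _ _ hA
    obtain ⟨B, hBq⟩ := intify _ _ hB
    have hAint : A ^ 2 = (m + n) ^ 2 + n ^ 2 := by
      have : ((A : ℚ)) ^ 2 = (((m + n) ^ 2 + n ^ 2 : ℤ) : ℚ) := by rw [hAq]; exact hA
      exact_mod_cast this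
    have hBint : B ^ 2 = (m - n) ^ 2 + n ^ 2 := by
      have : ((B : ℚ)) ^ 2 = (((m - n) ^ 2 + n ^ 2 : ℤ) : ℚ) := by rw [hBq]; exact hB
      exact_mod_cast this
    have hfinal : m ^ 4 + 4 * n ^ 4 = (A * B) ^ 2 := by
      linear_combination (-(B ^ 2)) * hAint + (-((m + n) ^ 2 + n ^ 2)) * hBint
    have hm0 : m ≠ 0 := by
      rw [hm]
      exact Rat.num_ne_zero.mpr hu0
    have hn0 : n ≠ 0 := by
      rw [hn]
      exact_mod_cast u.den_nz
    exact key_int m n (A * B) hm0 hn0 hfinal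

theorem stmt_4 (x y : ℝ)
    (hmid : (x = 1 / 2 ∧ 0 ≤ y ∧ y ≤ 1) ∨ (y = 1 / 2 ∧ 0 ≤ x ∧ x ≤ 1)) :
    ¬ ((∃ q : ℚ, (q : ℝ) = Real.sqrt (x ^ 2 + y ^ 2)) ∧
       (∃ q : ℚ, (q : ℝ) = Real.sqrt ((x - 1) ^ 2 + y ^ 2)) ∧
       (∃ q : ℚ, (q : ℝ) = Real.sqrt ((x - 1) ^ 2 + (y - 1) ^ 2)) ∧
       (∃ q : ℚ, (q : ℝ) = Real.sqrt (x ^ 2 + (y - 1) ^ 2))) := by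
  rintro ⟨⟨q1, hq1⟩, ⟨q2, hq2⟩, ⟨q3, hq3⟩, ⟨q4, hq4⟩⟩
  rcases hmid with ⟨hx, -, -⟩ | ⟨hy, -, -⟩
  · subst hx
    have h1 : ((q1 : ℝ)) ^ 2 = (1/2) ^ 2 + y ^ 2 := by
      rw [hq1, Real.sq_sqrt (by positivity)]
    have h4 : ((q4 : ℝ)) ^ 2 = (1/2) ^ 2 + (y - 1) ^ 2 := by
      rw [hq4, Real.sq_sqrt (by positivity)]
    set u : ℚ := q1 ^ 2 - q4 ^ 2 with hu
    have hur : ((u : ℝ)) = 2 * y - 1 := by rw [hu]; push_cast; rw [h1, h4]; ring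
    refine key_rat u (2 * q1) (2 * q4) ?_ ?_
    · have : (((2 * q1) ^ 2 : ℚ) : ℝ) = (((u + 1) ^ 2 + 1 : ℚ) : ℝ) := by
        push_cast
        rw [hur]
        nlinarith [h1]
      exact_mod_cast this
    · have : (((2 * q4) ^ 2 : ℚ) : ℝ) = (((u - 1) ^ 2 + 1 : ℚ) : ℝ) := by
        push_cast
        rw [hur]
        nlinarith [h4]
      exact_mod_cast this
  · subst hy
    have h1 : ((q1 : ℝ)) ^ 2 = x ^ 2 + (1/2) ^ 2 := by
      rw [hq1, Real.sq_sqrt (by positivity)]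
    have h2 : ((q2 : ℝ)) ^ 2 = (x - 1) ^ 2 + (1/2) ^ 2 := by
      rw [hq2, Real.sq_sqrt (by positivity)]
    set u : ℚ := q1 ^ 2 - q2 ^ 2 with hu
    have hur : ((u : ℝ)) = 2 * x - 1 := by rw [hu]; push_cast; rw [h1, h2]; ring
    refine key_rat u (2 * q1) (2 * q2) ?_ ?_
    · have : (((2 * q1) ^ 2 : ℚ) : ℝ) = (((u + 1) ^ 2 + 1 : ℚ) : ℝ) := by
        push_cast
        rw [hur]
        nlinarith [h1]
      exact_mod_cast this
    · have : (((2 * q2) ^ 2 : ℚ) : ℝ) = (((u - 1) ^ 2 + 1 : ℚ) : ℝ) := by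
        push_cast
        rw [hur]
        nlinarith [h2]
      exact_mod_cast this
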